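/- Let G3(X,Y,Z) = Y^3*Z - Y*Z^3 - (X^2+Z^2)^2, regarded over an algebraic closure K of F_3. Then there is no nonzero vector (x,y,z) in K^3 at which G3 and all three partial derivatives ∂G3/∂X, ∂G3/∂Y, ∂G3/∂Z vanish simultaneously; that is, G3 defines a nonsingular plane quartic curve. -/
import Mathlib


open MvPolynomial

/-- The plane quartic `G3` over the algebraic closure of `𝔽₃`. -/
noncomputable def G3polyBar : MvPolynomial (Fin 3) (AlgebraicClosure (ZMod 3)) :=
  (X 1) ^ 3 * X 2 - X 1 * (X 2) ^ 3 - ((X 0) ^ 2 + (X 2) ^ 2) ^ 2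

theorem stmt_14 :
    ¬ ∃ v : Fin 3 → AlgebraicClosure (ZMod 3), v ≠ 0 ∧
      eval v G3polyBar = 0 ∧ ∀ i : Fin 3, eval v (pderiv i G3polyBar) = 0 := by
  rintro ⟨v, hv, hG, hd⟩
  have h3 : (3 : AlgebraicClosure (ZMod 3)) = 0 := by
    have := CharP.cast_eq_zero (AlgebraicClosure (ZMod 3)) 3
    exact_mod_cast this
  have h1 := hd 1
  have h2 := hd 2
  have h0 := hd 0
  simp [G3polyBar, pderiv_X, Pi.single_apply] at h0 h1 h2
  have hc : v 2 = 0 := by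
    have hcube : v 2 ^ 3 = 0 := by linear_combination -h1 + v 2 * v 1 ^ 2 * h3
    exact pow_eq_zero_iff (by norm_num) |>.mp hcube
  have hb : v 1 = 0 := by
    have hcube : v 1 ^ 3 = 0 := by
      linear_combination h2 + v 1 * v 2 ^ 2 * h3 +
        (4 * v 0 ^ 2 + 4 * v 2 ^ 2) * hc
    exact pow_eq_zero_iff (by norm_num) |>.mp hcube
  have h2ne : (2 : AlgebraicClosure (ZMod 3)) ≠ 0 := by
    intro h
    have : (1 : AlgebraicClosure (ZMod 3)) = 0 := by linear_combination h3 - h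
    exact one_ne_zero this
  have ha : v 0 = 0 := by
    rcases h0 with h | h | h | h
    · exact absurd h h2ne
    · have : v 0 ^ 2 = 0 := by linear_combination h - (v 2) * hc
      exact pow_eq_zero_iff (by norm_num) |>.mp this
    · exact absurd h h2ne
    · exact h
  apply hv
  funext i
  fin_cases i <;> simpa using by assumption
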